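/- arXiv:2106.05274 — 2 statements merged into one kernel-verified Lean document; each statement's English description precedes it below -/
import Mathlib

section
/- Let d ≥ 1 and let α be an integer n-cochain and β an integer m-cochain on the d-dimensional hypercube, with n + m + 1 ≤ d. Then δ(α ∪' β) = (δα) ∪' β − (−1)^n α ∪' (δβ), as an equality of integer cochains. -/
/-- The three possible entries of a cell label of the hypercube:
`dot` = `•` (a spanned direction), `pls` = `+`, `mns` = `−`. -/
inductive Sgn : Type
  | dot : Sgn
  | pls : Sgn
  | mns : Sgn
  deriving DecidableEq

instance instFintypeSgn : Fintype Sgn :=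
  ⟨{Sgn.dot, Sgn.pls, Sgn.mns}, fun x => by cases x <;> simp⟩

/-- A cell of the `d`-dimensional hypercube, labeled by a tuple in `{•,+,−}^d`. -/
abbrev Cell (d : ℕ) := Fin d → Sgn

/-- A `ℤ₂`-cochain on the `d`-dimensional hypercube. -/
abbrev Cochain (d : ℕ) := Cell d → ZMod 2

/-- The top cell `(•,…,•)`. -/
def topCell (d : ℕ) : Cell d := fun _ => Sgn.dot

/-- The set of coordinates of a cell labeled `•`. -/
def dots {d : ℕ} (w : Cell d) : Finset (Fin d) :=
  Finset.univ.filter (fun j => w j = Sgn.dot)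

/-- The coboundary of a `ℤ₂`-cochain: `(δα)(w)` is the sum of `α` over all cells obtained
from `w` by replacing exactly one entry equal to `•` by `+` or by `−`. -/
def delta {d : ℕ} (α : Cochain d) : Cochain d := fun w =>
  ∑ j ∈ dots w, (α (Function.update w j Sgn.pls) + α (Function.update w j Sgn.mns))

/-- The set of coordinates where both `z` and `z'` are `•`. -/
def bothDot {d : ℕ} (z z' : Cell d) : Finset (Fin d) :=
  Finset.univ.filter (fun j => z j = Sgn.dot ∧ z' j = Sgn.dot)

/-- The allowed values of `(z_j, z'_j)` at a coordinate `j` not in the common-`•` set `I`: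
`(+,•)` or `(•,−)` when `ℓ(j) = #{i ∈ I : i < j}` is even, and `(−,•)` or `(•,+)` when it
is odd. -/
def pairCond {d : ℕ} (I : Finset (Fin d)) (j : Fin d) (a b : Sgn) : Prop :=
  if (I.filter (fun i => i < j)).card % 2 = 0 then
    (a = Sgn.pls ∧ b = Sgn.dot) ∨ (a = Sgn.dot ∧ b = Sgn.mns)
  else
    (a = Sgn.mns ∧ b = Sgn.dot) ∨ (a = Sgn.dot ∧ b = Sgn.pls)

/-- The pairs `(z,z')` appearing in the `m`-th higher cup product evaluated on the cell `w`:
the entries of `w` equal to `+` or `−` are fixed in both arguments, there are exactly `m`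
coordinates where both `z` and `z'` are `•`, and at the remaining `•`-coordinates of `w`
the parity condition `pairCond` holds. -/
def IntPair {d : ℕ} (m : ℕ) (w z z' : Cell d) : Prop :=
  (∀ j, w j ≠ Sgn.dot → z j = w j ∧ z' j = w j) ∧
    (bothDot z z').card = m ∧
    ∀ j, w j = Sgn.dot → j ∉ bothDot z z' → pairCond (bothDot z z') j (z j) (z' j)

open Classical in
/-- The finite set of pairs in `Int_m` relative to the cell `w`. -/
noncomputable def intPairs {d : ℕ} (m : ℕ) (w : Cell d) : Finset (Cell d × Cell d) :=
  Finset.univ.filter (fun p => IntPair m w p.1 p.2)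

/-- The higher cup product `α ∪_m β` of `ℤ₂`-cochains:
`(α ∪_m β)(w) = Σ_{(z,z') ∈ Int_m(w)} α(z)·β(z')`. -/
noncomputable def cup {d : ℕ} (m : ℕ) (α β : Cochain d) : Cochain d := fun w =>
  ∑ p ∈ intPairs m w, α p.1 * β p.2

/-- An integer cochain on the `d`-dimensional hypercube. -/
abbrev ICochain (d : ℕ) := Cell d → ℤ

/-- The integer coboundary with the cubical sign convention: on a cell whose `•` entries
occur at positions `j_1 < ⋯ < j_n`,
`(δα)(w) = Σ_{ℓ=1}^{n} [(−1)^{ℓ+1} α(w[j_ℓ ↦ +]) + (−1)^{ℓ} α(w[j_ℓ ↦ −])]`,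
where `ℓ` is the rank `#{i ∈ dots w : i ≤ j_ℓ}` of the position. -/
def idelta {d : ℕ} (α : ICochain d) : ICochain d := fun w =>
  ∑ j ∈ dots w,
    ((-1 : ℤ) ^ (((dots w).filter (fun i => i ≤ j)).card + 1)
        * α (Function.update w j Sgn.pls)
      + (-1 : ℤ) ^ ((dots w).filter (fun i => i ≤ j)).card
        * α (Function.update w j Sgn.mns))

/-- The number of `+` entries of a tuple. -/
def nPlus {d : ℕ} (z : Cell d) : ℕ := (Finset.univ.filter (fun j => z j = Sgn.pls)).card

/-- The number of "inversion" pairs `(x, y) ∈ X × Y` with `y < x`; summing these over the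
three pairs of blocks computes the sign of the permutation sending `(1,…,d)` to the
concatenation of the sorted blocks. -/
def inv2 {d : ℕ} (X Y : Finset (Fin d)) : ℕ := ((X ×ˢ Y).filter (fun p => p.2 < p.1)).card

/-- The positions `b_1 < ⋯ < b_n` (among the `•`-entries of the evaluation cell `w`)
where `z'` is `+` or `−`. -/
def bSet {d : ℕ} (w z' : Cell d) : Finset (Fin d) := (dots w).filter (fun j => z' j ≠ Sgn.dot)

/-- The positions `a_1 < ⋯ < a_{d−n−k}` (among the `•`-entries of the evaluation cell `w`)
where `z` is `+` or `−`. -/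
def aSet {d : ℕ} (w z : Cell d) : Finset (Fin d) := (dots w).filter (fun j => z j ≠ Sgn.dot)

/-- The sign `(−1)^s = (−1)^{N_+}·sgn(π)` attached to a pair `(z,z')`, where `N_+` is the
total number of `+` entries among `z` and `z'` and `sgn(π)` is the sign of the permutation
sending `(1,…,d)` to `(i_1,…,i_k, b_1,…,b_n, a_1,…,a_{d−n−k})`, computed as `(−1)` to the
number of inversions of that concatenation. -/
def icupSign {d : ℕ} (w z z' : Cell d) : ℤ :=
  (-1 : ℤ) ^ (nPlus z + nPlus z'
    + inv2 (bothDot z z') (bSet w z') + inv2 (bothDot z z') (aSet w z)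
    + inv2 (bSet w z') (aSet w z))

/-- The integer higher cup product `α ∪'_k β`:
`(α ∪'_k β)(w) = Σ_{(z,z') ∈ Int_k(w)} (−1)^s α(z) β(z')`. -/
noncomputable def icup {d : ℕ} (k : ℕ) (α β : ICochain d) : ICochain d := fun w =>
  ∑ p ∈ intPairs k w, icupSign w p.1 p.2 * α p.1 * β p.2

/-- `α` is an integer `p`-cochain: it vanishes outside `p`-cells. -/
def IsICochainOfDeg {d : ℕ} (p : ℕ) (α : ICochain d) : Prop :=
  ∀ w : Cell d, (dots w).card ≠ p → α w = 0

section IcupAux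
open Finset Function

lemma npc {a b : ℕ} (h : a % 2 = b % 2) : (-1:ℤ)^a = (-1)^b := by
  rcases Nat.even_or_odd a with ha | ha
  · have hb : Even b := by
      rcases ha with ⟨k, hk⟩; exact (Nat.even_iff).2 (by omega)
    rw [ha.neg_one_pow, hb.neg_one_pow]
  · have hb : Odd b := by
      rcases ha with ⟨k, hk⟩; exact (Nat.odd_iff).2 (by omega)
    rw [ha.neg_one_pow, hb.neg_one_pow]

lemma npn {a b : ℕ} (h : a % 2 ≠ b % 2) : (-1:ℤ)^a = -(-1:ℤ)^b := by
  have : (-1:ℤ)^a = (-1)^(b+1) := npc (by omega)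
  rw [this, pow_succ]; ring

variable {d : ℕ}

lemma mem_dots {w : Cell d} {i : Fin d} : i ∈ dots w ↔ w i = Sgn.dot := by
  simp [dots]

lemma inv2_eq_sum (X Y : Finset (Fin d)) :
    inv2 X Y = ∑ x ∈ X, (Y.filter (fun y => y < x)).card := by
  rw [inv2, Finset.card_filter, Finset.sum_product]
  congr 1; funext x
  rw [Finset.card_filter]

lemma inv2_empty_left (Y : Finset (Fin d)) : inv2 (∅ : Finset (Fin d)) Y = 0 := by
  rw [inv2_eq_sum]; simp

lemma inv2_insert_left {X Y : Finset (Fin d)} {j : Fin d} (hj : j ∉ X) :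
    inv2 (insert j X) Y = inv2 X Y + (Y.filter (fun y => y < j)).card := by
  rw [inv2_eq_sum, inv2_eq_sum, Finset.sum_insert hj]; ring

lemma inv2_insert_right {X Y : Finset (Fin d)} {j : Fin d} (hj : j ∉ Y) :
    inv2 X (insert j Y) = inv2 X Y + (X.filter (fun x => j < x)).card := by
  rw [inv2_eq_sum, inv2_eq_sum]
  have h : ∀ x : Fin d, ((insert j Y).filter (fun y => y < x)).card
      = (Y.filter (fun y => y < x)).card + (if j < x then 1 else 0) := by
    intro x
    rw [Finset.filter_insert]
    by_cases hx : j < x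
    · rw [if_pos hx, if_pos hx, Finset.card_insert_of_notMem (by
        simp only [Finset.mem_filter]; tauto)]
    · rw [if_neg hx, if_neg hx, add_zero]
  rw [Finset.sum_congr rfl (fun x _ => h x), Finset.sum_add_distrib]
  congr 1
  rw [Finset.card_filter]

end IcupAux
section IcupAux2
open Finset Function

variable {d : ℕ}

/-- The first member of the `Int_0` pair determined by `S ⊆ dots w`. -/
def zC (w : Cell d) (S : Finset (Fin d)) : Cell d :=
  fun j => if w j = Sgn.dot then (if j ∈ S then Sgn.pls else Sgn.dot) else w j

/-- The second member of the `Int_0` pair determined by `S ⊆ dots w`. -/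
def zC' (w : Cell d) (S : Finset (Fin d)) : Cell d :=
  fun j => if w j = Sgn.dot then (if j ∈ S then Sgn.dot else Sgn.mns) else w j

lemma dots_zC {w : Cell d} {S : Finset (Fin d)} (hS : S ⊆ dots w) :
    dots (zC w S) = dots w \ S := by
  ext i
  by_cases hw : w i = Sgn.dot
  · by_cases hiS : i ∈ S <;>
      simp [mem_dots, Finset.mem_sdiff, zC, hw, hiS]
  · have : i ∉ S := fun h => hw (mem_dots.mp (hS h))
    simp [mem_dots, Finset.mem_sdiff, zC, hw, this]

lemma dots_zC' {w : Cell d} {S : Finset (Fin d)} (hS : S ⊆ dots w) :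
    dots (zC' w S) = S := by
  ext i
  by_cases hw : w i = Sgn.dot
  · by_cases hiS : i ∈ S <;> simp [mem_dots, zC', hw, hiS]
  · have : i ∉ S := fun h => hw (mem_dots.mp (hS h))
    simp [mem_dots, zC', hw, this]

lemma dots_update_pls (w : Cell d) (j : Fin d) :
    dots (Function.update w j Sgn.pls) = (dots w).erase j := by
  ext i
  by_cases hij : i = j
  · subst hij; simp [mem_dots, Function.update_self]
  · simp [mem_dots, Function.update_of_ne hij, Finset.mem_erase, hij]

lemma dots_update_mns (w : Cell d) (j : Fin d) :
    dots (Function.update w j Sgn.mns) = (dots w).erase j := by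
  ext i
  by_cases hij : i = j
  · subst hij; simp [mem_dots, Function.update_self]
  · simp [mem_dots, Function.update_of_ne hij, Finset.mem_erase, hij]

lemma nPlus_zC {w : Cell d} {S : Finset (Fin d)} (hS : S ⊆ dots w) :
    nPlus (zC w S) = S.card + nPlus w := by
  have h : Finset.univ.filter (fun i => zC w S i = Sgn.pls)
      = S ∪ Finset.univ.filter (fun i => w i = Sgn.pls) := by
    ext i
    by_cases hw : w i = Sgn.dot
    · by_cases hiS : i ∈ S <;> simp only [Finset.mem_filter, bothDot, bSet, aSet] <;> simp [zC, hw, hiS]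
    · have : i ∉ S := fun h => hw (mem_dots.mp (hS h))
      simp only [Finset.mem_filter, bothDot, bSet, aSet] <;> simp [zC, hw, this]
  have hdisj : Disjoint S (Finset.univ.filter (fun i => w i = Sgn.pls)) := by
    rw [Finset.disjoint_left]
    intro i hiS hi
    have := mem_dots.mp (hS hiS)
    simp only [Finset.mem_filter] at hi
    rw [this] at hi; exact absurd hi.2 (by simp)
  rw [nPlus, h, Finset.card_union_of_disjoint hdisj, nPlus]

lemma nPlus_zC' {w : Cell d} (S : Finset (Fin d)) :
    nPlus (zC' w S) = nPlus w := by
  have h : Finset.univ.filter (fun i => zC' w S i = Sgn.pls)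
      = Finset.univ.filter (fun i => w i = Sgn.pls) := by
    ext i
    by_cases hw : w i = Sgn.dot
    · by_cases hiS : i ∈ S <;> simp only [Finset.mem_filter, bothDot, bSet, aSet] <;> simp [zC', hw, hiS]
    · simp only [Finset.mem_filter, bothDot, bSet, aSet] <;> simp [zC', hw]
  rw [nPlus, h, nPlus]

lemma nPlus_update_pls {w : Cell d} {j : Fin d} (hj : w j = Sgn.dot) :
    nPlus (Function.update w j Sgn.pls) = nPlus w + 1 := by
  have h : Finset.univ.filter (fun i => Function.update w j Sgn.pls i = Sgn.pls)
      = insert j (Finset.univ.filter (fun i => w i = Sgn.pls)) := by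
    ext i
    by_cases hij : i = j
    · subst hij; simp [Function.update_self]
    · simp [Function.update_of_ne hij, hij]
  rw [nPlus, h, Finset.card_insert_of_notMem (by simp [hj]), nPlus]

lemma nPlus_update_mns {w : Cell d} {j : Fin d} (hj : w j = Sgn.dot) :
    nPlus (Function.update w j Sgn.mns) = nPlus w := by
  have h : Finset.univ.filter (fun i => Function.update w j Sgn.mns i = Sgn.pls)
      = Finset.univ.filter (fun i => w i = Sgn.pls) := by
    ext i
    by_cases hij : i = j
    · subst hij; simp [Function.update_self, hj]
    · simp [Function.update_of_ne hij]
  rw [nPlus, h, nPlus]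

lemma bothDot_zC (w : Cell d) (S : Finset (Fin d)) :
    bothDot (zC w S) (zC' w S) = ∅ := by
  ext i
  by_cases hw : w i = Sgn.dot
  · by_cases hiS : i ∈ S <;> simp only [Finset.mem_filter, bothDot, bSet, aSet] <;> simp [bothDot, zC, zC', hw, hiS]
  · simp only [Finset.mem_filter, bothDot, bSet, aSet] <;> simp [bothDot, zC, zC', hw]

lemma bSet_zC' (w : Cell d) (S : Finset (Fin d)) :
    bSet w (zC' w S) = dots w \ S := by
  ext i
  by_cases hw : w i = Sgn.dot
  · by_cases hiS : i ∈ S <;>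
      simp only [Finset.mem_filter, bothDot, bSet, aSet] <;> simp [bSet, mem_dots, Finset.mem_sdiff, zC', hw, hiS]
  · simp only [Finset.mem_filter, bothDot, bSet, aSet] <;> simp [bSet, mem_dots, Finset.mem_sdiff, zC', hw]

lemma aSet_zC {w : Cell d} {S : Finset (Fin d)} (hS : S ⊆ dots w) :
    aSet w (zC w S) = S := by
  ext i
  by_cases hw : w i = Sgn.dot
  · by_cases hiS : i ∈ S <;> simp only [Finset.mem_filter, bothDot, bSet, aSet] <;> simp [aSet, mem_dots, zC, hw, hiS]
  · have : i ∉ S := fun h => hw (mem_dots.mp (hS h))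
    simp only [Finset.mem_filter, bothDot, bSet, aSet] <;> simp [aSet, mem_dots, zC, hw, this]

lemma icupSign_zC {w : Cell d} {S : Finset (Fin d)} (hS : S ⊆ dots w) :
    icupSign w (zC w S) (zC' w S)
      = (-1:ℤ)^(S.card + 2 * nPlus w + inv2 (dots w \ S) S) := by
  rw [icupSign, nPlus_zC hS, nPlus_zC', bothDot_zC, bSet_zC', aSet_zC hS,
    inv2_empty_left, inv2_empty_left]
  exact npc (by omega)

end IcupAux2
section IcupAux3
open Finset Function

variable {d : ℕ}

lemma intPair_zero_of_subset {w : Cell d} {S : Finset (Fin d)} (hS : S ⊆ dots w) :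
    IntPair 0 w (zC w S) (zC' w S) := by
  refine ⟨?_, ?_, ?_⟩
  · intro j hj
    simp [zC, zC', hj]
  · rw [bothDot_zC]; simp
  · intro j hj _
    rw [bothDot_zC]
    by_cases hjS : j ∈ S
    · simp [pairCond, zC, zC', hj, hjS]
    · simp [pairCond, zC, zC', hj, hjS]

lemma intPair_zero_eq {w z z' : Cell d} (h : IntPair 0 w z z') :
    z = zC w ((dots w).filter (fun i => z i = Sgn.pls))
      ∧ z' = zC' w ((dots w).filter (fun i => z i = Sgn.pls)) := by
  obtain ⟨hfix, hcard, hpc⟩ := h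
  have hBD : bothDot z z' = ∅ := Finset.card_eq_zero.mp hcard
  have hcases : ∀ i, w i = Sgn.dot →
      (z i = Sgn.pls ∧ z' i = Sgn.dot) ∨ (z i = Sgn.dot ∧ z' i = Sgn.mns) := by
    intro i hi
    have hni : i ∉ bothDot z z' := by rw [hBD]; simp
    have := hpc i hi hni
    rw [hBD] at this
    simpa [pairCond] using this
  constructor
  · funext i
    by_cases hw : w i = Sgn.dot
    · rcases hcases i hw with ⟨h1, h2⟩ | ⟨h1, h2⟩
      · simp [zC, hw, Finset.mem_filter, mem_dots, h1]
      · simp [zC, hw, Finset.mem_filter, mem_dots, h1]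
    · rw [(hfix i hw).1]; simp [zC, hw]
  · funext i
    by_cases hw : w i = Sgn.dot
    · rcases hcases i hw with ⟨h1, h2⟩ | ⟨h1, h2⟩
      · simp [zC', hw, Finset.mem_filter, mem_dots, h1, h2]
      · simp [zC', hw, Finset.mem_filter, mem_dots, h1, h2]
    · rw [(hfix i hw).2]; simp [zC', hw]

lemma intPairs_zero_eq (w : Cell d) :
    intPairs 0 w = (dots w).powerset.image (fun S => (zC w S, zC' w S)) := by
  classical
  ext p
  simp only [intPairs, Finset.mem_filter, Finset.mem_univ, true_and, Finset.mem_image,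
    Finset.mem_powerset]
  constructor
  · intro h
    obtain ⟨h1, h2⟩ := intPair_zero_eq h
    exact ⟨(dots w).filter (fun i => p.1 i = Sgn.pls), Finset.filter_subset _ _,
      by rw [Prod.ext_iff]; exact ⟨h1.symm, h2.symm⟩⟩
  · rintro ⟨S, hS, rfl⟩
    exact intPair_zero_of_subset hS

lemma zC_inj {w : Cell d} {S₁ S₂ : Finset (Fin d)} (h1 : S₁ ⊆ dots w) (h2 : S₂ ⊆ dots w)
    (h : zC w S₁ = zC w S₂) : S₁ = S₂ := by
  ext i
  constructor
  · intro hi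
    have hw : w i = Sgn.dot := mem_dots.mp (h1 hi)
    have : zC w S₁ i = Sgn.pls := by simp [zC, hw, hi]
    rw [h] at this
    by_contra hni
    simp [zC, hw, hni] at this
  · intro hi
    have hw : w i = Sgn.dot := mem_dots.mp (h2 hi)
    have : zC w S₂ i = Sgn.pls := by simp [zC, hw, hi]
    rw [← h] at this
    by_contra hni
    simp [zC, hw, hni] at this

lemma icup_zero_eq (α β : ICochain d) (w : Cell d) :
    icup 0 α β w = ∑ S ∈ (dots w).powerset,
      icupSign w (zC w S) (zC' w S) * α (zC w S) * β (zC' w S) := by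
  classical
  rw [icup, intPairs_zero_eq, Finset.sum_image]
  intro S₁ h1 S₂ h2 h
  exact zC_inj (Finset.mem_powerset.mp h1) (Finset.mem_powerset.mp h2)
    (congrArg Prod.fst h)

end IcupAux3
section IcupAux4
open Finset Function

variable {d : ℕ}

lemma zC_update_pls {w : Cell d} {j : Fin d} (hj : w j = Sgn.dot) (S : Finset (Fin d)) :
    zC (Function.update w j Sgn.pls) S = zC w (insert j S) := by
  funext i
  by_cases hij : i = j
  · subst hij; simp [zC, Function.update_self, hj]
  · simp [zC, Function.update_of_ne hij, Finset.mem_insert, hij]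

lemma zC'_update_pls {w : Cell d} {j : Fin d} (hj : w j = Sgn.dot) (S : Finset (Fin d)) :
    zC' (Function.update w j Sgn.pls) S
      = Function.update (zC' w (insert j S)) j Sgn.pls := by
  funext i
  by_cases hij : i = j
  · subst hij; simp [zC', Function.update_self]
  · simp [zC', Function.update_of_ne hij, Finset.mem_insert, hij]

lemma zC_update_mns {w : Cell d} {j : Fin d} (hj : w j = Sgn.dot) (S : Finset (Fin d)) :
    zC (Function.update w j Sgn.mns) S = Function.update (zC w S) j Sgn.mns := by
  funext i
  by_cases hij : i = j
  · subst hij; simp [zC, Function.update_self]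
  · simp [zC, Function.update_of_ne hij]

lemma zC'_update_mns {w : Cell d} {j : Fin d} (hj : w j = Sgn.dot) {S : Finset (Fin d)}
    (hjS : j ∉ S) : zC' (Function.update w j Sgn.mns) S = zC' w S := by
  funext i
  by_cases hij : i = j
  · subst hij; simp [zC', Function.update_self, hj, hjS]
  · simp [zC', Function.update_of_ne hij]

lemma update_zC_pls {w : Cell d} {j : Fin d} (hj : w j = Sgn.dot) (S : Finset (Fin d)) :
    Function.update (zC w S) j Sgn.pls = zC w (insert j S) := by
  funext i
  by_cases hij : i = j
  · subst hij; simp [zC, Function.update_self, hj]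
  · simp [zC, Function.update_of_ne hij, Finset.mem_insert, hij]

lemma update_zC'_mns {w : Cell d} {j : Fin d} (hj : w j = Sgn.dot) {S : Finset (Fin d)}
    (hjS : j ∉ S) :
    Function.update (zC' w (insert j S)) j Sgn.mns = zC' w S := by
  funext i
  by_cases hij : i = j
  · subst hij; simp [zC', Function.update_self, hj, hjS]
  · simp [zC', Function.update_of_ne hij, Finset.mem_insert, hij]

lemma powerset_filter_not_mem (D : Finset (Fin d)) (j : Fin d) :
    D.powerset.filter (fun S => j ∉ S) = (D.erase j).powerset := by
  ext S
  simp only [Finset.mem_filter, Finset.mem_powerset, Finset.subset_erase]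

lemma swap1 (D : Finset (Fin d)) (f : Finset (Fin d) → Fin d → ℤ) :
    ∑ S ∈ D.powerset, ∑ j ∈ D \ S, f S j
      = ∑ j ∈ D, ∑ S ∈ (D.erase j).powerset, f S j := by
  classical
  have h1 : ∀ S ∈ D.powerset, ∑ j ∈ D \ S, f S j
      = ∑ j ∈ D, if j ∉ S then f S j else 0 := by
    intro S hS
    rw [Finset.sdiff_eq_filter, Finset.sum_filter]
  rw [Finset.sum_congr rfl h1, Finset.sum_comm]
  refine Finset.sum_congr rfl (fun j hj => ?_)
  rw [← Finset.sum_filter, powerset_filter_not_mem]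

lemma swap2 (D : Finset (Fin d)) (f : Finset (Fin d) → Fin d → ℤ) :
    ∑ T ∈ D.powerset, ∑ j ∈ T, f T j
      = ∑ j ∈ D, ∑ S ∈ (D.erase j).powerset, f (insert j S) j := by
  classical
  have h1 : ∀ T ∈ D.powerset, ∑ j ∈ T, f T j
      = ∑ j ∈ D, if j ∈ T then f T j else 0 := by
    intro T hT
    rw [← Finset.sum_filter]
    congr 1
    rw [Finset.filter_mem_eq_inter, Finset.inter_eq_right.mpr (Finset.mem_powerset.mp hT)]
  rw [Finset.sum_congr rfl h1, Finset.sum_comm]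
  refine Finset.sum_congr rfl (fun j hj => ?_)
  rw [← Finset.sum_filter]
  refine Finset.sum_bij' (fun T _ => T.erase j) (fun S _ => insert j S) ?_ ?_ ?_ ?_ ?_
  · intro T hT
    simp only [Finset.mem_filter, Finset.mem_powerset] at hT
    exact Finset.mem_powerset.mpr (Finset.erase_subset_erase j hT.1)
  · intro S hS
    simp only [Finset.mem_powerset] at hS
    simp only [Finset.mem_filter, Finset.mem_powerset]
    exact ⟨Finset.insert_subset hj (hS.trans (Finset.erase_subset j D)),
      Finset.mem_insert_self j S⟩
  · intro T hT
    simp only [Finset.mem_filter] at hT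
    exact Finset.insert_erase hT.2
  · intro S hS
    simp only [Finset.mem_powerset] at hS
    exact Finset.erase_insert (fun h => (Finset.mem_erase.mp (hS h)).1 rfl)
  · intro T hT
    simp only [Finset.mem_filter] at hT
    rw [Finset.insert_erase hT.2]

end IcupAux4
section IcupAux5
open Finset Function

variable {d : ℕ}

/-- Summand of the LHS after expansion. -/
def Lterm (α β : ICochain d) (w : Cell d) (j : Fin d) (S : Finset (Fin d)) : ℤ :=
  (-1:ℤ)^(((dots w).filter (fun i => i ≤ j)).card + 1) *
    (icupSign (Function.update w j Sgn.pls) (zC (Function.update w j Sgn.pls) S)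
        (zC' (Function.update w j Sgn.pls) S)
      * α (zC (Function.update w j Sgn.pls) S) * β (zC' (Function.update w j Sgn.pls) S))
  + (-1:ℤ)^(((dots w).filter (fun i => i ≤ j)).card) *
    (icupSign (Function.update w j Sgn.mns) (zC (Function.update w j Sgn.mns) S)
        (zC' (Function.update w j Sgn.mns) S)
      * α (zC (Function.update w j Sgn.mns) S) * β (zC' (Function.update w j Sgn.mns) S))

/-- Summand of `(δα) ∪' β` after expansion. -/
def R1term (α β : ICochain d) (w : Cell d) (j : Fin d) (S : Finset (Fin d)) : ℤ :=
  icupSign w (zC w S) (zC' w S) *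
    ((-1:ℤ)^(((dots w \ S).filter (fun i => i ≤ j)).card + 1)
        * α (Function.update (zC w S) j Sgn.pls)
      + (-1:ℤ)^(((dots w \ S).filter (fun i => i ≤ j)).card)
        * α (Function.update (zC w S) j Sgn.mns))
    * β (zC' w S)

/-- Summand of `α ∪' (δβ)` after expansion. -/
def R2term (α β : ICochain d) (w : Cell d) (j : Fin d) (S : Finset (Fin d)) : ℤ :=
  icupSign w (zC w S) (zC' w S) * α (zC w S) *
    ((-1:ℤ)^((S.filter (fun i => i ≤ j)).card + 1)
        * β (Function.update (zC' w S) j Sgn.pls)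
      + (-1:ℤ)^((S.filter (fun i => i ≤ j)).card)
        * β (Function.update (zC' w S) j Sgn.mns))

lemma key {n : ℕ} (α β : ICochain d) (hα : IsICochainOfDeg n α)
    (w : Cell d) (j : Fin d) (S : Finset (Fin d))
    (hj : w j = Sgn.dot) (hS : S ⊆ (dots w).erase j) :
    Lterm α β w j S = R1term α β w j S - (-1:ℤ)^n * R2term α β w j (insert j S) := by
  have hjD : j ∈ dots w := mem_dots.mpr hj
  have hjS : j ∉ S := fun h => (Finset.mem_erase.mp (hS h)).1 rfl
  have hSD : S ⊆ dots w := hS.trans (Finset.erase_subset j (dots w))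
  have hTD : insert j S ⊆ dots w := Finset.insert_subset hjD hSD
  have hSp : S ⊆ dots (Function.update w j Sgn.pls) := by
    rw [dots_update_pls]; exact hS
  have hSm : S ⊆ dots (Function.update w j Sgn.mns) := by
    rw [dots_update_mns]; exact hS
  have hDT : dots (Function.update w j Sgn.pls) \ S = dots w \ insert j S := by
    rw [dots_update_pls]
    ext i
    simp only [Finset.mem_sdiff, Finset.mem_erase, Finset.mem_insert, not_or]
    tauto
  have hDT' : dots (Function.update w j Sgn.mns) \ S = dots w \ insert j S := by
    rw [dots_update_mns, ← hDT, dots_update_pls]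
  have hjDT : j ∉ dots w \ insert j S := by simp
  have hDS : dots w \ S = insert j (dots w \ insert j S) := by
    ext i
    simp only [Finset.mem_sdiff, Finset.mem_insert, not_or]
    constructor
    · rintro ⟨h1, h2⟩
      by_cases hij : i = j
      · exact Or.inl hij
      · exact Or.inr ⟨h1, hij, h2⟩
    · rintro (rfl | ⟨h1, _, h3⟩)
      · exact ⟨hjD, hjS⟩
      · exact ⟨h1, h3⟩
  -- counting facts
  have F1 : ((dots w).filter (fun i => i ≤ j)).card
      = ((dots w \ S).filter (fun i => i ≤ j)).card + (S.filter (fun i => i < j)).card := by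
    have hsplit : (dots w).filter (fun i => i ≤ j)
        = ((dots w \ S).filter (fun i => i ≤ j)) ∪ (S.filter (fun i => i < j)) := by
      ext i
      simp only [Finset.mem_filter, Finset.mem_union, Finset.mem_sdiff]
      constructor
      · rintro ⟨h1, h2⟩
        by_cases hiS : i ∈ S
        · exact Or.inr ⟨hiS, lt_of_le_of_ne h2 (fun h => hjS (h ▸ hiS))⟩
        · exact Or.inl ⟨⟨h1, hiS⟩, h2⟩
      · rintro (⟨⟨h1, _⟩, h2⟩ | ⟨h1, h2⟩)
        · exact ⟨h1, h2⟩
        · exact ⟨hSD h1, le_of_lt h2⟩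
    rw [hsplit, Finset.card_union_of_disjoint]
    rw [Finset.disjoint_left]
    rintro i hi hi'
    simp only [Finset.mem_filter, Finset.mem_sdiff] at hi hi'
    exact hi.1.2 hi'.1
  have F2 : inv2 (dots w \ S) S
      = inv2 (dots w \ insert j S) S + (S.filter (fun i => i < j)).card := by
    rw [hDS, inv2_insert_left hjDT]
  have F3 : inv2 (dots w \ insert j S) (insert j S)
      = inv2 (dots w \ insert j S) S
        + ((dots w \ insert j S).filter (fun i => j < i)).card :=
    inv2_insert_right hjS
  have F4 : ((insert j S).filter (fun i => i ≤ j)).card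
      = (S.filter (fun i => i < j)).card + 1 := by
    have h : (insert j S).filter (fun i => i ≤ j) = insert j (S.filter (fun i => i < j)) := by
      ext i
      simp only [Finset.mem_filter, Finset.mem_insert]
      constructor
      · rintro ⟨(rfl | h1), h2⟩
        · exact Or.inl rfl
        · exact Or.inr ⟨h1, lt_of_le_of_ne h2 (fun h => hjS (h ▸ h1))⟩
      · rintro (rfl | ⟨h1, h2⟩)
        · exact ⟨Or.inl rfl, le_refl _⟩
        · exact ⟨Or.inr h1, le_of_lt h2⟩
    rw [h, Finset.card_insert_of_notMem (by simp)]
  have F5 : ((dots w \ S).filter (fun i => i ≤ j)).card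
      = ((dots w \ insert j S).filter (fun i => i < j)).card + 1 := by
    have h : (dots w \ S).filter (fun i => i ≤ j)
        = insert j ((dots w \ insert j S).filter (fun i => i < j)) := by
      ext i
      simp only [Finset.mem_filter, Finset.mem_insert, Finset.mem_sdiff, not_or]
      constructor
      · rintro ⟨⟨h1, h2⟩, h3⟩
        by_cases hij : i = j
        · exact Or.inl hij
        · exact Or.inr ⟨⟨h1, hij, h2⟩, lt_of_le_of_ne h3 hij⟩
      · rintro (rfl | ⟨⟨h1, _, h3⟩, h4⟩)
        · exact ⟨⟨hjD, hjS⟩, le_refl _⟩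
        · exact ⟨⟨h1, h3⟩, le_of_lt h4⟩
    rw [h, Finset.card_insert_of_notMem (by simp)]
  have F6 : ((dots w \ insert j S).filter (fun i => i < j)).card
      + ((dots w \ insert j S).filter (fun i => j < i)).card
      = (dots w \ insert j S).card := by
    classical
    have hpart : (dots w \ insert j S).filter (fun i => j < i)
        = (dots w \ insert j S).filter (fun i => ¬ i < j) := by
      ext i
      simp only [Finset.mem_filter, Finset.mem_sdiff, Finset.mem_insert, not_or, not_lt]
      constructor
      · rintro ⟨h1, h2⟩
        exact ⟨h1, le_of_lt h2⟩
      · rintro ⟨h1, h2⟩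
        exact ⟨h1, lt_of_le_of_ne h2 (Ne.symm h1.2.1)⟩
    rw [hpart]
    exact Finset.card_filter_add_card_filter_not (fun i => i < j)
  -- expand and rewrite
  simp only [Lterm, R1term, R2term]
  rw [icupSign_zC hSp, icupSign_zC hSm, icupSign_zC hSD, icupSign_zC hTD,
    nPlus_update_pls hj, nPlus_update_mns hj, hDT, hDT',
    zC_update_pls hj S, zC'_update_pls hj S, zC_update_mns hj S, zC'_update_mns hj hjS,
    update_zC_pls hj S, update_zC'_mns hj hjS,
    Finset.card_insert_of_notMem hjS]
  set r := ((dots w).filter (fun i => i ≤ j)).card with hr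
  set ρ₁ := ((dots w \ S).filter (fun i => i ≤ j)).card with hρ₁
  set ρ₂ := ((insert j S).filter (fun i => i ≤ j)).card with hρ₂
  set c := (S.filter (fun i => i < j)).card with hcc
  set q := ((dots w \ insert j S).filter (fun i => i < j)).card with hq
  set q' := ((dots w \ insert j S).filter (fun i => j < i)).card with hq'
  set I := inv2 (dots w \ insert j S) S with hI
  set K := inv2 (dots w \ S) S with hK
  set KT := inv2 (dots w \ insert j S) (insert j S) with hKT
  set N := (dots w \ insert j S).card with hN
  set p := nPlus w with hp
  have sA : (-1:ℤ)^(r + (S.card + 2*p + I)) = (-1)^((S.card + 2*p + K) + ρ₁) :=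
    npc (by omega)
  by_cases hn : N = n
  · have sB : (-1:ℤ)^((r + 1) + (S.card + 2*(p+1) + I))
        = -(-1:ℤ)^(n + ((S.card + 1 + 2*p + KT) + (ρ₂ + 1))) :=
      npn (by omega)
    have sC : (-1:ℤ)^((S.card + 2*p + K) + (ρ₁ + 1))
        = (-1:ℤ)^(n + ((S.card + 1 + 2*p + KT) + ρ₂)) :=
      npc (by omega)
    linear_combination
      (α (zC w (insert j S)) * β (Function.update (zC' w (insert j S)) j Sgn.pls)) * sB
      + (α (Function.update (zC w S) j Sgn.mns) * β (zC' w S)) * sA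
      - (α (zC w (insert j S)) * β (zC' w S)) * sC
  · have hA1 : α (zC w (insert j S)) = 0 := by
      apply hα
      rw [dots_zC hTD, ← hN]
      exact hn
    rw [hA1]
    linear_combination (α (Function.update (zC w S) j Sgn.mns) * β (zC' w S)) * sA
end IcupAux5
section IcupAux6
open Finset Function

variable {d : ℕ}

lemma idelta_icup_eq (α β : ICochain d) (w : Cell d) :
    idelta (icup 0 α β) w
      = ∑ j ∈ dots w, ∑ S ∈ ((dots w).erase j).powerset, Lterm α β w j S := by
  simp only [idelta]
  refine Finset.sum_congr rfl (fun j hj => ?_)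
  rw [icup_zero_eq, icup_zero_eq, dots_update_pls, dots_update_mns, Finset.mul_sum,
    Finset.mul_sum, ← Finset.sum_add_distrib]
  simp only [Lterm]

lemma icup_idelta_left_eq (α β : ICochain d) (w : Cell d) :
    icup 0 (idelta α) β w
      = ∑ j ∈ dots w, ∑ S ∈ ((dots w).erase j).powerset, R1term α β w j S := by
  rw [icup_zero_eq, ← swap1 (dots w) (fun S j => R1term α β w j S)]
  refine Finset.sum_congr rfl (fun S hS => ?_)
  have hSD : S ⊆ dots w := Finset.mem_powerset.mp hS
  simp only [idelta]
  rw [dots_zC hSD, Finset.mul_sum, Finset.sum_mul]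
  simp only [R1term]

lemma icup_idelta_right_eq (α β : ICochain d) (w : Cell d) :
    icup 0 α (idelta β) w
      = ∑ j ∈ dots w, ∑ S ∈ ((dots w).erase j).powerset, R2term α β w j (insert j S) := by
  rw [icup_zero_eq, ← swap2 (dots w) (fun T j => R2term α β w j T)]
  refine Finset.sum_congr rfl (fun S hS => ?_)
  have hSD : S ⊆ dots w := Finset.mem_powerset.mp hS
  simp only [idelta]
  rw [dots_zC' hSD, Finset.mul_sum]
  simp only [R2term]

end IcupAux6
/-- For `d ≥ 1`, an integer `n`-cochain `α` and an integer `m`-cochain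
`β` on the `d`-dimensional hypercube with `n + m + 1 ≤ d`:
`δ(α ∪' β) = (δα) ∪' β − (−1)^n α ∪' (δβ)`, as an equality of integer cochains
(where `∪' = ∪'₀`). -/
theorem icup_zero_leibniz (d n m : ℕ) (hd : 1 ≤ d) (hnm : n + m + 1 ≤ d)
    (α β : ICochain d) (hα : IsICochainOfDeg n α) (hβ : IsICochainOfDeg m β) :
    idelta (icup 0 α β) = icup 0 (idelta α) β - ((-1 : ℤ) ^ n) • icup 0 α (idelta β) := by
  funext w
  simp only [Pi.sub_apply, Pi.smul_apply, smul_eq_mul]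
  rw [idelta_icup_eq, icup_idelta_left_eq, icup_idelta_right_eq, Finset.mul_sum,
    ← Finset.sum_sub_distrib]
  refine Finset.sum_congr rfl (fun j hj => ?_)
  rw [Finset.mul_sum, ← Finset.sum_sub_distrib]
  refine Finset.sum_congr rfl (fun S hS => ?_)
  exact key α β hα w j S (mem_dots.mp hj) (Finset.mem_powerset.mp hS)
end

section
/- Let d ≥ 1, let α be a ℤ₂-(d−1)-cochain on the d-dimensional hypercube, and let 𝟙_top be the indicator ℤ₂-cochain of the top cell (•,…,•). Then (𝟙_top ∪_{d−1} α)(•,…,•) = Σ_{k=1}^{d} α(k̂_{ε(k)}), where k̂_ε denotes the (d−1)-cell whose k-th entry is ε and whose other entries are all •, and ε(k) is + if k is even and − if k is odd. -/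
instance : Fintype Sgn :=
  ⟨{Sgn.dot, Sgn.pls, Sgn.mns}, fun x => by cases x <;> simp⟩

/-- The `(d−1)`-cell `î_s` whose `i`-th entry is `s` and whose other entries are all `•`. -/
def hatCell {d : ℕ} (i : Fin d) (s : Sgn) : Cell d := fun j => if j = i then s else Sgn.dot

/-- `ε(t)`: the sign `+` if `t` is even and `−` if `t` is odd. -/
def eps (t : ℕ) : Sgn := if t % 2 = 0 then Sgn.pls else Sgn.mns

/-- `α` is a `p`-cochain: it vanishes on all cells that are not `p`-cells. -/
def IsCochainOfDeg {d : ℕ} (p : ℕ) (α : Cochain d) : Prop :=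
  ∀ w : Cell d, (dots w).card ≠ p → α w = 0

/-- The indicator cochain of a cell: value `1` on that cell and `0` elsewhere. -/
def indicator {d : ℕ} (c : Cell d) : Cochain d := fun w => if w = c then 1 else 0

lemma eps_ne_dot (t : ℕ) : eps t ≠ Sgn.dot := by
  unfold eps; split <;> simp

lemma bothDot_top {d : ℕ} (z' : Cell d) : bothDot (topCell d) z' = dots z' := by
  simp [bothDot, dots, topCell]

lemma dots_hatCell {d : ℕ} (k : Fin d) (s : Sgn) (hs : s ≠ Sgn.dot) :
    dots (hatCell k s) = Finset.univ.erase k := by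
  ext j
  by_cases h : j = k <;> simp [dots, hatCell, Finset.mem_erase, h, hs]

lemma card_filter_lt_erase {d : ℕ} (k : Fin d) :
    ((Finset.univ.erase k).filter (fun i => i < k)).card = k.val := by
  have h : (Finset.univ.erase k).filter (fun i => i < k) = Finset.Iio k := by
    ext j
    simp only [Finset.mem_filter, Finset.mem_erase, Finset.mem_univ, Finset.mem_Iio, and_true]
    exact ⟨fun h => h.2, fun h => ⟨ne_of_lt h, h⟩⟩
  rw [h, Fin.card_Iio]

lemma intPair_hat {d : ℕ} (k : Fin d) :
    IntPair (d - 1) (topCell d) (topCell d) (hatCell k (eps (k.val + 1))) := by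
  have hne := eps_ne_dot (k.val + 1)
  have hb : bothDot (topCell d) (hatCell k (eps (k.val + 1))) = Finset.univ.erase k := by
    rw [bothDot_top, dots_hatCell k _ hne]
  refine ⟨fun j hj => absurd rfl hj, ?_, ?_⟩
  · rw [hb, Finset.card_erase_of_mem (Finset.mem_univ k), Finset.card_univ, Fintype.card_fin]
  · intro j _ hj
    rw [hb] at hj ⊢
    have hjk : j = k := by
      by_contra h; exact hj (Finset.mem_erase.mpr ⟨h, Finset.mem_univ j⟩)
    subst hjk
    unfold pairCond
    rw [card_filter_lt_erase]
    rcases Nat.even_or_odd j.val with he | ho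
    · have h0 : j.val % 2 = 0 := Nat.even_iff.mp he
      have h1 : (j.val + 1) % 2 = 1 := by omega
      simp [h0, topCell, hatCell, eps, h1]
    · have h0 : j.val % 2 = 1 := Nat.odd_iff.mp ho
      have h1 : (j.val + 1) % 2 = 0 := by omega
      simp [h0, topCell, hatCell, eps, h1]

lemma intPair_top_eq {d : ℕ} (hd : 1 ≤ d) (z z' : Cell d)
    (h : IntPair (d - 1) (topCell d) z z') (hz : z = topCell d) :
    ∃ k : Fin d, z' = hatCell k (eps (k.val + 1)) := by
  subst hz
  obtain ⟨_, hcard, hpc⟩ := h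
  rw [bothDot_top] at hcard hpc
  have hle : (dots z').card ≤ d := by
    simpa using Finset.card_le_univ (dots z')
  have hcompl : (dots z')ᶜ.card = 1 := by
    rw [Finset.card_compl, hcard, Fintype.card_fin]; omega
  obtain ⟨k, hk⟩ := Finset.card_eq_one.mp hcompl
  have hdots : dots z' = Finset.univ.erase k := by
    rw [← Finset.compl_singleton, ← hk, compl_compl]
  have hkdots : k ∉ dots z' := by
    rw [hdots]; simp
  have hpck := hpc k rfl hkdots
  unfold pairCond at hpck
  rw [hdots, card_filter_lt_erase] at hpck
  have hzdot : topCell d k = Sgn.dot := rfl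
  have hval : z' k = eps (k.val + 1) := by
    rcases Nat.even_or_odd k.val with he | ho
    · have h0 : k.val % 2 = 0 := Nat.even_iff.mp he
      have h1 : (k.val + 1) % 2 = 1 := by omega
      rw [if_pos h0] at hpck
      rcases hpck with ⟨ha, _⟩ | ⟨_, hb⟩
      · rw [hzdot] at ha; exact absurd ha (by simp)
      · rw [hb]; simp [eps, h1]
    · have h0 : k.val % 2 = 1 := Nat.odd_iff.mp ho
      have h1 : (k.val + 1) % 2 = 0 := by omega
      rw [if_neg (by omega)] at hpck
      rcases hpck with ⟨ha, _⟩ | ⟨_, hb⟩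
      · rw [hzdot] at ha; exact absurd ha (by simp)
      · rw [hb]; simp [eps, h1]
  refine ⟨k, funext fun j => ?_⟩
  by_cases hjk : j = k
  · subst hjk; rw [hval]; simp [hatCell]
  · have hj : j ∈ dots z' := by
      rw [hdots]; exact Finset.mem_erase.mpr ⟨hjk, Finset.mem_univ j⟩
    have : z' j = Sgn.dot := by simpa [dots] using hj
    rw [this]; simp [hatCell, hjk]

/-- For `d ≥ 1` and a `ℤ₂`-`(d−1)`-cochain `α` on the `d`-dimensional
hypercube, with `𝟙_top` the indicator cochain of the top cell `(•,…,•)`: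
`(𝟙_top ∪_{d−1} α)(•,…,•) = Σ_{k=1}^{d} α(k̂_{ε(k)})`, where (`1`-based) `ε(k)` is `+` if
`k` is even and `−` if `k` is odd. -/
theorem indicator_top_cup_d_sub_one (d : ℕ) (hd : 1 ≤ d) (α : Cochain d)
    (hα : IsCochainOfDeg (d - 1) α) :
    cup (d - 1) (indicator (topCell d)) α (topCell d)
      = ∑ k : Fin d, α (hatCell k (eps (k.val + 1))) := by
  classical
  have key : (intPairs (d - 1) (topCell d)).filter (fun p => p.1 = topCell d)
      = Finset.univ.image (fun k : Fin d => (topCell d, hatCell k (eps (k.val + 1)))) := by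
    ext p
    simp only [Finset.mem_filter, Finset.mem_image, Finset.mem_univ, true_and, intPairs]
    constructor
    · rintro ⟨hip, h1⟩
      obtain ⟨k, hk⟩ := intPair_top_eq hd p.1 p.2 hip h1
      exact ⟨k, (Prod.ext h1 hk).symm⟩
    · rintro ⟨k, rfl⟩
      exact ⟨intPair_hat k, rfl⟩
  rw [cup, ← Finset.sum_filter_add_sum_filter_not (intPairs (d - 1) (topCell d))
    (fun p => p.1 = topCell d)]
  have hz : ∑ p ∈ (intPairs (d - 1) (topCell d)).filter (fun p => ¬ p.1 = topCell d),
      indicator (topCell d) p.1 * α p.2 = 0 := by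
    apply Finset.sum_eq_zero
    intro p hp
    have h := (Finset.mem_filter.mp hp).2
    simp [indicator, h]
  rw [hz, add_zero, key, Finset.sum_image ?_]
  · simp [indicator]
  · intro a _ b _ hab
    by_contra h
    have h2 : hatCell a (eps (a.val + 1)) a = hatCell b (eps (b.val + 1)) a :=
      congrFun (congrArg Prod.snd hab) a
    simp only [hatCell, if_pos rfl, if_neg h] at h2
    exact eps_ne_dot _ h2
end
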